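/- Let λ ∈ ℂ with Im λ > 0. Then the bounded linear operator H → H given by u ↦ Pu − iλ·Q*(Qu) − λ²u is bijective (and hence has a bounded inverse). -/

import Mathlib

open ContinuousLinearMap Complex

lemma pencil_coercive
    {H Y : Type*} [NormedAddCommGroup H] [InnerProductSpace ℂ H] [CompleteSpace H]
    [NormedAddCommGroup Y] [InnerProductSpace ℂ Y] [CompleteSpace Y]
    (P : H →L[ℂ] H) (hP : IsSelfAdjoint P)
    (hPnn : ∀ u : H, 0 ≤ (inner ℂ (P u) u : ℂ).re)
    (Q : H →L[ℂ] Y)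
    (lam : ℂ) (hlam : 0 < lam.im) (u : H) :
    lam.im * ‖lam‖ * ‖u‖ ^ 2 ≤
      ‖(inner ℂ (P u - (Complex.I * lam) • (ContinuousLinearMap.adjoint Q) (Q u)
        - (lam ^ 2) • u) u : ℂ)‖ := by
  set F : ℂ := inner ℂ (P u - (Complex.I * lam) • (ContinuousLinearMap.adjoint Q) (Q u)
        - (lam ^ 2) • u) u with hF
  have hq : (inner ℂ ((ContinuousLinearMap.adjoint Q) (Q u)) u : ℂ) = ((‖Q u‖ ^ 2 : ℝ) : ℂ) := by
    rw [ContinuousLinearMap.adjoint_inner_left, inner_self_eq_norm_sq_to_K]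
    norm_cast
  have hn : (inner ℂ u u : ℂ) = ((‖u‖ ^ 2 : ℝ) : ℂ) := by
    rw [inner_self_eq_norm_sq_to_K]; norm_cast
  have hp_im : (inner ℂ (P u) u : ℂ).im = 0 := by
    have hsym : (inner ℂ (P u) u : ℂ) = inner ℂ u (P u) := hP.isSymmetric u u
    have h2 : (starRingEnd ℂ) (inner ℂ (P u) u : ℂ) = inner ℂ (P u) u :=
      (inner_conj_symm u (P u)).trans hsym.symm
    exact Complex.conj_eq_iff_im.mp h2
  have hFval : F = (inner ℂ (P u) u : ℂ) + Complex.I * (starRingEnd ℂ) lam * ((‖Q u‖ ^ 2 : ℝ) : ℂ)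
      - ((starRingEnd ℂ) lam) ^ 2 * ((‖u‖ ^ 2 : ℝ) : ℂ) := by
    rw [hF, inner_sub_left, inner_sub_left, inner_smul_left, inner_smul_left, hq, hn]
    simp only [map_mul, map_pow, Complex.conj_I]
    ring
  have key : lam.im * ‖lam‖ ^ 2 * ‖u‖ ^ 2 ≤ (lam * F).im := by
    have h1 : (lam * F).im = lam.im * (inner ℂ (P u) u : ℂ).re
        + Complex.normSq lam * ‖Q u‖ ^ 2 + lam.im * Complex.normSq lam * ‖u‖ ^ 2 := by
      rw [hFval]
      simp [pow_two, Complex.mul_im, Complex.mul_re, Complex.normSq_apply, hp_im,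
        Complex.conj_re, Complex.conj_im, Complex.ofReal_re, Complex.ofReal_im]
      ring
    rw [h1, ← Complex.sq_norm lam]
    nlinarith [mul_nonneg hlam.le (hPnn u),
      mul_nonneg (sq_nonneg (‖lam‖)) (sq_nonneg ‖Q u‖)]
  have habs : (lam * F).im ≤ ‖lam‖ * ‖F‖ := by
    calc (lam * F).im ≤ ‖lam * F‖ := Complex.im_le_norm _
    _ = ‖lam‖ * ‖F‖ := norm_mul _ _
  have hlabs : 0 < ‖lam‖ := by
    refine norm_pos_iff.mpr (fun h => ?_)
    rw [h] at hlam; simp at hlam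
  have hle := le_trans key habs
  calc lam.im * ‖lam‖ * ‖u‖ ^ 2
      = (lam.im * ‖lam‖ ^ 2 * ‖u‖ ^ 2) / ‖lam‖ := by
        field_simp
    _ ≤ (‖lam‖ * ‖F‖) / ‖lam‖ := by gcongr
    _ = ‖F‖ := by field_simp

/-- Step 1 of the proof of Lemma 3.9 (bounded-operator form): for `Im λ > 0`
the damped pencil `u ↦ Pu − iλ Q*(Qu) − λ²u` is bijective. -/
theorem pencil_bijective_upper_half_plane
    {H Y : Type*} [NormedAddCommGroup H] [InnerProductSpace ℂ H] [CompleteSpace H]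
    [NormedAddCommGroup Y] [InnerProductSpace ℂ Y] [CompleteSpace Y]
    (P : H →L[ℂ] H) (hP : IsSelfAdjoint P)
    (hPnn : ∀ u : H, 0 ≤ (inner ℂ (P u) u : ℂ).re)
    (Q : H →L[ℂ] Y)
    (lam : ℂ) (hlam : 0 < lam.im) :
    Function.Bijective (fun u : H =>
      P u - (Complex.I * lam) • (ContinuousLinearMap.adjoint Q) (Q u) - (lam ^ 2) • u) := by
  set T : H →L[ℂ] H := P - (Complex.I * lam) • ((ContinuousLinearMap.adjoint Q).comp Q)
      - (lam ^ 2) • (ContinuousLinearMap.id ℂ H) with hT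
  have hTapp : ∀ u : H, T u
      = P u - (Complex.I * lam) • (ContinuousLinearMap.adjoint Q) (Q u) - (lam ^ 2) • u := by
    intro u; simp [hT]
  have hlabs : 0 < ‖lam‖ := by
    refine norm_pos_iff.mpr (fun h => ?_)
    rw [h] at hlam; simp at hlam
  set c : ℝ := lam.im * ‖lam‖ with hcdef
  have hc : 0 < c := mul_pos hlam hlabs
  have hcoer : ∀ u : H, c * ‖u‖ ^ 2 ≤ ‖T u‖ * ‖u‖ := by
    intro u
    have h1 := pencil_coercive P hP hPnn Q lam hlam u
    rw [← hTapp u] at h1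
    calc c * ‖u‖ ^ 2 ≤ ‖(inner ℂ (T u) u : ℂ)‖ := h1
      _ = ‖(inner ℂ (T u) u : ℂ)‖ := rfl
      _ ≤ ‖T u‖ * ‖u‖ := norm_inner_le_norm _ _
  have hbound : ∀ u : H, ‖u‖ ≤ c⁻¹ * ‖T u‖ := by
    intro u
    rcases eq_or_ne u 0 with rfl | hu
    · simp
    · have hn : 0 < ‖u‖ := norm_pos_iff.mpr hu
      have h1 := hcoer u
      have h2 : c * ‖u‖ ≤ ‖T u‖ := by nlinarith
      have h4 := mul_le_mul_of_nonneg_left h2 (inv_nonneg.mpr hc.le)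
      rwa [inv_mul_cancel_left₀ hc.ne'] at h4
  have hanti : AntilipschitzWith (⟨c⁻¹, by positivity⟩ : NNReal) T :=
    T.antilipschitz_of_bound (fun x => hbound x)
  have hinj : Function.Injective T := hanti.injective
  have hclosed : IsClosed (Set.range T) := hanti.isClosed_range T.uniformContinuous
  have hrange_closed : IsClosed (LinearMap.range (T : H →ₗ[ℂ] H) : Set H) := by
    convert hclosed using 1
    exact LinearMap.coe_range _
  have : CompleteSpace (LinearMap.range (T : H →ₗ[ℂ] H) : Submodule ℂ H) := hrange_closed.completeSpace_coe
  have horth : (LinearMap.range (T : H →ₗ[ℂ] H))ᗮ = ⊥ := by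
    rw [Submodule.eq_bot_iff]
    intro v hv
    have h0 : (inner ℂ (T v) v : ℂ) = 0 :=
      (Submodule.mem_orthogonal _ v).mp hv (T v) (LinearMap.mem_range_self _ v)
    have h1 := pencil_coercive P hP hPnn Q lam hlam v
    rw [← hTapp v, h0] at h1
    simp only [norm_zero] at h1
    have hv2 : ‖v‖ ^ 2 ≤ 0 := by
      by_contra h
      push_neg at h
      nlinarith [mul_pos (mul_pos hlam hlabs) h]
    have hv0 : ‖v‖ = 0 := by nlinarith [sq_nonneg ‖v‖, norm_nonneg v]
    exact norm_eq_zero.mp hv0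
  have hsurj : Function.Surjective T :=
    LinearMap.range_eq_top.mp (Submodule.orthogonal_eq_bot_iff.mp horth)
  have hfun : (fun u : H =>
      P u - (Complex.I * lam) • (ContinuousLinearMap.adjoint Q) (Q u) - (lam ^ 2) • u) = ⇑T := by
    funext u; exact (hTapp u).symm
  rw [hfun]
  exact ⟨hinj, hsurj⟩
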